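/- Let G be a graph, let e_1, ..., e_s be edges of G (with repetition allowed), and fix i ∈ {1,...,s}. Let G_i be the graph on V(G) whose edges are those of G together with all pairs even-connected in G with respect to the single edge e_i. Then two vertices u, v are even-connected in G with respect to e_1 ⋯ e_s (or uv ∈ E(G)) if and only if u, v are even-connected in G_i with respect to the list e_1,...,e_s with e_i removed (or uv ∈ E(G_i)), provided G is bipartite. -/

import Mathlib

open SimpleGraph

variable {V : Type*}

/-- `X, Y` form a bipartition of the simple graph `G`: they are disjoint,
cover the vertex set, and are both independent sets. -/
def IsBipartition (G : SimpleGraph V) (X Y : Set V) : Prop :=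
  Disjoint X Y ∧ X ∪ Y = Set.univ ∧
    (∀ u ∈ X, ∀ v ∈ X, ¬ G.Adj u v) ∧ (∀ u ∈ Y, ∀ v ∈ Y, ¬ G.Adj u v)

/-- `c : ZMod n → V` is a cycle of length `n` in `H`: `n` distinct vertices,
consecutive ones (cyclically) adjacent. -/
def IsCycleOn (H : SimpleGraph V) {n : ℕ} (c : ZMod n → V) : Prop :=
  Function.Injective c ∧ ∀ i, H.Adj (c i) (c (i + 1))

/-- An induced (chordless) cycle: the only adjacencies among the cycle
vertices are the cycle edges. -/
def IsInducedCycleOn (H : SimpleGraph V) {n : ℕ} (c : ZMod n → V) : Prop :=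
  IsCycleOn H c ∧ ∀ i j, H.Adj (c i) (c j) → j = i + 1 ∨ i = j + 1

/-- `u` and `v` are even-connected in `G` with respect to the edge list `E`:
there is a walk `p 0, …, p (2k+1)` in `G` from `u` to `v` with `k ≥ 1` whose
matched pairs `p (2l+1) p (2l+2)` all come from `E`, each member of `E` being
used at most its multiplicity in `E`. -/
def EvenConnected [DecidableEq V] (G : SimpleGraph V) (E : List (Sym2 V))
    (u v : V) : Prop :=
  ∃ (k : ℕ) (p : ℕ → V), 1 ≤ k ∧ p 0 = u ∧ p (2 * k + 1) = v ∧
    (∀ r, r ≤ 2 * k → G.Adj (p r) (p (r + 1))) ∧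
    (∀ l, l < k → s(p (2 * l + 1), p (2 * l + 2)) ∈ E) ∧
    (∀ e ∈ E, ((Finset.range k).filter
        (fun l => s(p (2 * l + 1), p (2 * l + 2)) = e)).card ≤ E.count e)

/-- The bipartite complement of `G` with respect to the bipartition `X ⊔ Y`. -/
def bipCompl (G : SimpleGraph V) (X Y : Set V) : SimpleGraph V :=
  SimpleGraph.fromRel (fun a b => a ∈ X ∧ b ∈ Y ∧ ¬ G.Adj a b)

section Proof
set_option linter.unusedSectionVars false
set_option linter.unusedTactic false
set_option linter.unreachableTactic false

variable [DecidableEq V] {G : SimpleGraph V} {X Y : Set V} {e : Sym2 V}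


variable [DecidableEq V] {G : SimpleGraph V} {X Y : Set V} {e : Sym2 V}

lemma bip_cross (hbip : IsBipartition G X Y) {a b : V} (hab : G.Adj a b) :
    a ∈ X ↔ b ∉ X := by
  obtain ⟨hdisj, hcover, hX, hY⟩ := hbip
  have ha : a ∈ X ∪ Y := hcover ▸ Set.mem_univ a
  have hb : b ∈ X ∪ Y := hcover ▸ Set.mem_univ b
  constructor
  · intro h1 h2; exact hX a h1 b h2 hab
  · intro h1
    rcases ha with h | h
    · exact h
    · rcases hb with h2 | h2
      · exact absurd h2 h1
      · exact absurd hab (hY a h b h2)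

lemma ec_single {a b : V} (h : EvenConnected G [e] a b) :
    ∃ x y, G.Adj a x ∧ s(x, y) = e ∧ G.Adj y b := by
  obtain ⟨k, p, hk, h0, hN, hadj, hmem, hcount⟩ := h
  have hkk : k = 1 := by
    have h1 := hcount e (by simp)
    have h2 : (Finset.range k).filter
        (fun l => s(p (2 * l + 1), p (2 * l + 2)) = e) = Finset.range k := by
      apply Finset.filter_true_of_mem
      intro l hl
      simpa using hmem l (Finset.mem_range.mp hl)
    rw [h2] at h1
    simp at h1
    omega
  subst hkk
  refine ⟨p 1, p 2, ?_, ?_, ?_⟩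
  · have h3 := hadj 0 (by omega); rwa [h0] at h3
  · simpa using hmem 0 (by omega)
  · have h3 := hadj 2 (by omega)
    have h4 : p (2 * 1 + 1) = p 3 := by norm_num
    rw [h4] at hN
    rwa [hN] at h3

def auxGi [DecidableEq V] (G : SimpleGraph V) (e : Sym2 V) : SimpleGraph V :=
  SimpleGraph.fromRel (fun a b => G.Adj a b ∨ EvenConnected G [e] a b)

lemma ec_single_intro {a b x y : V} (hee : e ∈ G.edgeSet) (hax : G.Adj a x)
    (hxy : s(x, y) = e) (hyb : G.Adj y b) : EvenConnected G [e] a b := by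
  refine ⟨1, fun m => if m = 0 then a else if m = 1 then x else if m = 2 then y else b,
    le_refl 1, rfl, rfl, ?_, ?_, ?_⟩
  · intro r hr
    interval_cases r
    · simpa using hax
    · have : G.Adj x y := G.mem_edgeSet.mp (by rwa [← hxy] at hee)
      simpa using this
    · simpa using hyb
  · intro l hl
    interval_cases l
    simpa using hxy
  · intro e' he'
    calc ((Finset.range 1).filter _).card ≤ (Finset.range 1).card :=
        Finset.card_filter_le _ _
      _ ≤ _ := by
        simp only [List.mem_singleton] at he'
        subst he'
        simp

lemma auxGi_adj_iff (hee : e ∈ G.edgeSet) {a b : V} :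
    (auxGi G e).Adj a b ↔
      a ≠ b ∧ (G.Adj a b ∨ ∃ x y, G.Adj a x ∧ s(x, y) = e ∧ G.Adj y b) := by
  rw [auxGi, SimpleGraph.fromRel_adj]
  constructor
  · rintro ⟨hne, h | h⟩
    · refine ⟨hne, ?_⟩
      rcases h with h | h
      · exact Or.inl h
      · exact Or.inr (ec_single h)
    · refine ⟨hne, ?_⟩
      rcases h with h | h
      · exact Or.inl h.symm
      · obtain ⟨x, y, h1, h2, h3⟩ := ec_single h
        exact Or.inr ⟨y, x, h3.symm, Sym2.eq_swap.trans h2, h1.symm⟩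
  · rintro ⟨hne, h | ⟨x, y, h1, h2, h3⟩⟩
    · exact ⟨hne, Or.inl (Or.inl h)⟩
    · exact ⟨hne, Or.inl (Or.inr (ec_single_intro hee h1 h2 h3))⟩

lemma auxGi_key (hee : e ∈ G.edgeSet) {a c d : V} (h : (auxGi G e).Adj a c)
    (hcd : s(c, d) = e) : G.Adj a c := by
  rcases (auxGi_adj_iff hee).mp h with ⟨hne, h' | ⟨x, y, h1, h2, h3⟩⟩
  · exact h'
  · rcases Sym2.eq_iff.mp (h2.trans hcd.symm) with ⟨hx, hy⟩ | ⟨hx, hy⟩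
    · exact hx ▸ h1
    · exact absurd (hy ▸ h3) (G.loopless.irrefl c)

lemma auxGi_cross (hbip : IsBipartition G X Y) (hee : e ∈ G.edgeSet) {a b : V}
    (h : (auxGi G e).Adj a b) : a ∈ X ↔ b ∉ X := by
  rcases (auxGi_adj_iff hee).mp h with ⟨hne, h' | ⟨x, y, h1, h2, h3⟩⟩
  · exact bip_cross hbip h'
  · have c1 := bip_cross hbip h1
    have c2 := bip_cross hbip (G.mem_edgeSet.mp (show s(x, y) ∈ G.edgeSet by rwa [← h2] at hee))
    have c3 := bip_cross hbip h3
    tauto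

lemma walk_parity {H : SimpleGraph V}
    (hcross : ∀ a b, H.Adj a b → (a ∈ X ↔ b ∉ X))
    {p : ℕ → V} {N : ℕ} (hw : ∀ r, r ≤ N → H.Adj (p r) (p (r + 1))) :
    ∀ r, r ≤ N + 1 → (p r ∈ X ↔ (Even r ↔ p 0 ∈ X)) := by
  intro r
  induction r with
  | zero => intro _; simp
  | succ n ih =>
    intro hn
    have h1 := hcross _ _ (hw n (by omega))
    have h2 := ih (by omega)
    rw [Nat.even_add_one]
    tauto


end Proof

section Main2
variable [DecidableEq V] {G : SimpleGraph V} {X Y : Set V} {e : Sym2 V}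
set_option linter.unusedSectionVars false
set_option linter.unusedTactic false
set_option linter.unreachableTactic false

variable [DecidableEq V] {G : SimpleGraph V} {X Y : Set V} {e : Sym2 V}

set_option maxHeartbeats 800000 in
lemma claimA (hbip : IsBipartition G X Y) {E : List (Sym2 V)}
    (hE : ∀ e' ∈ E, e' ∈ G.edgeSet) (he : e ∈ E) :
    ∀ k : ℕ, 1 ≤ k → ∀ p : ℕ → V,
      (∀ r, r ≤ 2 * k → (auxGi G e).Adj (p r) (p (r + 1))) →
      (∀ l, l < k → s(p (2 * l + 1), p (2 * l + 2)) ∈ E) →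
      (∀ e' ∈ E, ((Finset.range k).filter
          (fun l => s(p (2 * l + 1), p (2 * l + 2)) = e')).card ≤ E.count e') →
      p 0 ≠ p (2 * k + 1) →
      (auxGi G e).Adj (p 0) (p (2 * k + 1)) ∨
        EvenConnected (auxGi G e) (E.erase e) (p 0) (p (2 * k + 1)) := by
  have hee : e ∈ G.edgeSet := hE e he
  intro k
  induction k using Nat.strong_induction_on with
  | _ k IH =>
  intro hk p hadj hmem hcount hne
  by_cases hex : ∃ l, l < k ∧ s(p (2 * l + 1), p (2 * l + 2)) = e
  · obtain ⟨l₀, hl₀, hpe⟩ := hex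
    have hG1 : G.Adj (p (2 * l₀)) (p (2 * l₀ + 1)) :=
      auxGi_key hee (hadj (2 * l₀) (by omega)) hpe
    have hG2 : G.Adj (p (2 * l₀ + 2)) (p (2 * l₀ + 3)) := by
      have h2 := auxGi_key hee ((hadj (2 * l₀ + 2) (by omega)).symm)
        (Sym2.eq_swap.trans hpe)
      exact h2.symm
    have hne03 : p (2 * l₀) ≠ p (2 * l₀ + 3) := by
      have hA := walk_parity (fun a b h => auxGi_cross hbip hee h) hadj
        (2 * l₀) (by omega)
      have hB := walk_parity (fun a b h => auxGi_cross hbip hee h) hadj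
        (2 * l₀ + 3) (by omega)
      intro heq
      rw [heq] at hA
      have e1 : Even (2 * l₀) := ⟨l₀, by omega⟩
      have e2 : ¬ Even (2 * l₀ + 3) := fun ⟨r, hr⟩ => by omega
      tauto
    have hshort : (auxGi G e).Adj (p (2 * l₀)) (p (2 * l₀ + 3)) :=
      (auxGi_adj_iff hee).mpr ⟨hne03, Or.inr ⟨_, _, hG1, hpe, hG2⟩⟩
    rcases eq_or_lt_of_le hk with hk1 | hk2
    · -- k = 1
      left
      have hl0 : l₀ = 0 := by omega
      have hkk : k = 1 := hk1.symm
      subst hl0; subst hkk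
      simpa using hshort
    · -- k ≥ 2
      set q : ℕ → V := fun m => if m ≤ 2 * l₀ then p m else p (m + 2) with hqdef
      have hqlow : ∀ m, m ≤ 2 * l₀ → q m = p m := fun m hm => by
        simp only [hqdef]; exact if_pos hm
      have hqhigh : ∀ m, 2 * l₀ < m → q m = p (m + 2) := fun m hm => by
        simp only [hqdef]; exact if_neg (by omega)
      have hq0 : q 0 = p 0 := hqlow 0 (by omega)
      have hqend : q (2 * (k - 1) + 1) = p (2 * k + 1) := by
        rw [hqhigh _ (by omega)]
        congr 1
        omega
      -- pair computations
      have hplow : ∀ l, l < l₀ →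
          s(q (2 * l + 1), q (2 * l + 2)) = s(p (2 * l + 1), p (2 * l + 2)) := by
        intro l hl
        rw [hqlow _ (by omega), hqlow _ (by omega)]
      have hphigh : ∀ l, l₀ ≤ l →
          s(q (2 * l + 1), q (2 * l + 2))
            = s(p (2 * (l + 1) + 1), p (2 * (l + 1) + 2)) := by
        intro l hl
        rw [hqhigh _ (by omega), hqhigh _ (by omega)]
        congr 2 <;> omega
      have hadj' : ∀ r, r ≤ 2 * (k - 1) → (auxGi G e).Adj (q r) (q (r + 1)) := by
        intro r hr
        rcases lt_trichotomy r (2 * l₀) with h | h | h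
        · rw [hqlow _ (by omega), hqlow _ (by omega)]
          exact hadj r (by omega)
        · subst h
          rw [hqlow _ (by omega), hqhigh _ (by omega)]
          have h3 : 2 * l₀ + 1 + 2 = 2 * l₀ + 3 := by omega
          rw [h3]
          exact hshort
        · rw [hqhigh _ (by omega), hqhigh _ (by omega)]
          have h3 : r + 1 + 2 = r + 2 + 1 := by omega
          rw [h3]
          exact hadj (r + 2) (by omega)
      have hmem' : ∀ l, l < k - 1 → s(q (2 * l + 1), q (2 * l + 2)) ∈ E := by
        intro l hl
        rcases lt_or_ge l l₀ with h | h
        · rw [hplow l h]; exact hmem l (by omega)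
        · rw [hphigh l h]; exact hmem (l + 1) (by omega)
      have hcount' : ∀ e' ∈ E, ((Finset.range (k - 1)).filter
          (fun l => s(q (2 * l + 1), q (2 * l + 2)) = e')).card ≤ E.count e' := by
        intro e' he'
        refine le_trans (Finset.card_le_card_of_injOn
          (fun l => if l < l₀ then l else l + 1) ?_ ?_) (hcount e' he')
        · intro l hl
          simp only [Finset.mem_coe, Finset.mem_filter, Finset.mem_range] at hl ⊢
          obtain ⟨hl1, hl2⟩ := hl
          split_ifs with h
          · exact ⟨by omega, (hplow l h) ▸ hl2⟩
          · exact ⟨by omega, (hphigh l (by omega)) ▸ hl2⟩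
        · intro a _ b _ hab
          simp only at hab
          split_ifs at hab <;> omega
      have hres := IH (k - 1) (by omega) (by omega) q hadj' hmem' hcount'
        (by rw [hq0, hqend]; exact hne)
      rw [hq0, hqend] at hres
      exact hres
  · right
    refine ⟨k, p, hk, rfl, rfl, hadj, ?_, ?_⟩
    · intro l hl
      have h1 := hmem l hl
      have h2 : s(p (2 * l + 1), p (2 * l + 2)) ≠ e := fun hc => hex ⟨l, hl, hc⟩
      exact (List.mem_erase_of_ne h2).mpr h1
    · intro e' he'
      by_cases hcase : e' = e
      · subst hcase
        have hempty : ((Finset.range k).filter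
            (fun l => s(p (2 * l + 1), p (2 * l + 2)) = e')) = ∅ := by
          rw [Finset.filter_eq_empty_iff]
          intro l hl hc
          exact hex ⟨l, Finset.mem_range.mp hl, hc⟩
        rw [hempty]
        simp
      · rw [List.count_erase_of_ne hcase]
        exact hcount e' (List.mem_of_mem_erase he')


end Main2

set_option linter.unusedTactic false
set_option linter.unreachableTactic false

set_option maxHeartbeats 1600000 in
lemma claimB [DecidableEq V] {G : SimpleGraph V} {X Y : Set V} {e : Sym2 V}
    (hbip : IsBipartition G X Y) {E : List (Sym2 V)}
    (hE : ∀ e' ∈ E, e' ∈ G.edgeSet) (he : e ∈ E) {u v : V}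
    (h : EvenConnected (auxGi G e) (E.erase e) u v) :
    EvenConnected G E u v := by
  classical
  have hee : e ∈ G.edgeSet := hE e he
  obtain ⟨k, q, hk, h0, hN, hadj, hmem, hcount⟩ := h
  have hEG : ∀ l, l < k → G.Adj (q (2 * l + 1)) (q (2 * l + 2)) := fun l hl =>
    G.mem_edgeSet.mp (hE _ (List.mem_of_mem_erase (hmem l hl)))
  -- generic count bound for the old walk, valid for every edge
  have hqb : ∀ e', ((Finset.range k).filter
      (fun l => s(q (2 * l + 1), q (2 * l + 2)) = e')).card ≤ (E.erase e).count e' := by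
    intro e'
    rcases ((Finset.range k).filter
        (fun l => s(q (2 * l + 1), q (2 * l + 2)) = e')).eq_empty_or_nonempty with hf | ⟨l, hl⟩
    · rw [hf]; simp
    · have hl' := Finset.mem_filter.mp hl
      exact hcount e' (hl'.2 ▸ hmem l (Finset.mem_range.mp hl'.1))
  set B := (Finset.range (2 * k + 1)).filter (fun r => ¬ G.Adj (q r) (q (r + 1))) with hB
  rcases B.eq_empty_or_nonempty with hBe | hBne
  · -- every step is already a G-edge
    have hgood : ∀ r, r ≤ 2 * k → G.Adj (q r) (q (r + 1)) := by
      intro r hr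
      by_contra hc
      have hrB : r ∈ B := Finset.mem_filter.mpr ⟨Finset.mem_range.mpr (by omega), hc⟩
      rw [hBe] at hrB
      exact absurd hrB (Finset.notMem_empty r)
    refine ⟨k, q, hk, h0, hN, hgood,
      (fun l hl => List.mem_of_mem_erase (hmem l hl)), ?_⟩
    intro e' he'
    exact le_trans (hqb e') (List.Sublist.count_le _ List.erase_sublist)
  · -- there is at least one non-G-edge; it must be an even slot
    set r1 := B.min' hBne with hr1def
    set r2 := B.max' hBne with hr2def
    have hr1B : r1 ∈ B := B.min'_mem hBne
    have hr2B : r2 ∈ B := B.max'_mem hBne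
    have hr12 : r1 ≤ r2 := B.min'_le _ hr2B
    have hr1le : r1 ≤ 2 * k := by
      have := Finset.mem_range.mp (Finset.mem_filter.mp hr1B).1; omega
    have hr2le : r2 ≤ 2 * k := by
      have := Finset.mem_range.mp (Finset.mem_filter.mp hr2B).1; omega
    have hbad1 : ¬ G.Adj (q r1) (q (r1 + 1)) := (Finset.mem_filter.mp hr1B).2
    have hbad2 : ¬ G.Adj (q r2) (q (r2 + 1)) := (Finset.mem_filter.mp hr2B).2
    have heven1 : Even r1 := by
      by_contra hodd
      obtain ⟨l, hl⟩ : ∃ l, r1 = 2 * l + 1 := by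
        rcases Nat.even_or_odd r1 with h' | ⟨l, hl⟩
        · exact absurd h' hodd
        · exact ⟨l, by omega⟩
      rw [hl] at hbad1
      exact hbad1 (hEG l (by omega))
    have heven2 : Even r2 := by
      by_contra hodd
      obtain ⟨l, hl⟩ : ∃ l, r2 = 2 * l + 1 := by
        rcases Nat.even_or_odd r2 with h' | ⟨l, hl⟩
        · exact absurd h' hodd
        · exact ⟨l, by omega⟩
      rw [hl] at hbad2
      exact hbad2 (hEG l (by omega))
    -- extract the special-edge data at r1 and r2
    obtain ⟨x1, y1, ha1, hb1, hc1⟩ :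
        ∃ x y, G.Adj (q r1) x ∧ s(x, y) = e ∧ G.Adj y (q (r1 + 1)) := by
      rcases (auxGi_adj_iff hee).mp (hadj r1 hr1le) with ⟨_, hGadj | hspec⟩
      · exact absurd hGadj hbad1
      · exact hspec
    obtain ⟨x2, y2, ha2, hb2, hc2⟩ :
        ∃ x y, G.Adj (q r2) x ∧ s(x, y) = e ∧ G.Adj y (q (r2 + 1)) := by
      rcases (auxGi_adj_iff hee).mp (hadj r2 hr2le) with ⟨_, hGadj | hspec⟩
      · exact absurd hGadj hbad2
      · exact hspec
    -- alignment: x1 = x2 and y1 = y2 (bipartiteness)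
    have hsame : q r1 ∈ X ↔ q r2 ∈ X := by
      have h1 := walk_parity (fun a b h => auxGi_cross hbip hee h) hadj r1 (by omega)
      have h2 := walk_parity (fun a b h => auxGi_cross hbip hee h) hadj r2 (by omega)
      rw [h1, h2]
      constructor <;> intro <;> tauto
    obtain ⟨hx12, hy12⟩ : x1 = x2 ∧ y1 = y2 := by
      rcases Sym2.eq_iff.mp (hb1.trans hb2.symm) with h' | ⟨hxy, hyx⟩
      · exact h'
      · exfalso
        subst hxy; subst hyx
        have cx1 := bip_cross hbip ha1
        have cx2 := bip_cross hbip ha2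
        have cxy := bip_cross hbip
          (G.mem_edgeSet.mp (show s(y1, x1) ∈ G.edgeSet by rwa [← hb2] at hee))
        tauto
    subst hx12; subst hy12
    -- build the shortcut walk
    obtain ⟨m, hm⟩ : ∃ m, r2 = r1 + 2 * m := by
      obtain ⟨a, ha⟩ := heven1
      obtain ⟨b, hb⟩ := heven2
      exact ⟨b - a, by omega⟩
    obtain ⟨l₁, hl₁⟩ : ∃ t, r1 = 2 * t := by
      obtain ⟨a, ha⟩ := heven1; exact ⟨a, by omega⟩
    have hmk : r1 + 2 * m ≤ 2 * k := hm ▸ hr2le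
    set w : ℕ → V := fun s => if s ≤ r1 then q s else if s = r1 + 1 then x1
      else if s = r1 + 2 then y1 else q (s + 2 * m - 2) with hwdef
    have hw1 : ∀ s, s ≤ r1 → w s = q s := fun s hs => by
      simp only [hwdef]; exact if_pos hs
    have hw2 : w (r1 + 1) = x1 := by
      simp only [hwdef]
      rw [if_neg (by omega)]
      simp
    have hw3 : w (r1 + 2) = y1 := by
      simp only [hwdef]
      rw [if_neg (by omega), if_neg (by omega)]
      simp
    have hw4 : ∀ s, r1 + 3 ≤ s → w s = q (s + 2 * m - 2) := fun s hs => by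
      simp only [hwdef]
      rw [if_neg (by omega), if_neg (by omega), if_neg (by omega)]
    -- the new walk's data
    refine ⟨k + 1 - m, w, by omega, ?_, ?_, ?_, ?_, ?_⟩
    · rw [hw1 0 (by omega)]; exact h0
    · have hidx : 2 * (k + 1 - m) + 1 + 2 * m - 2 = 2 * k + 1 := by omega
      rw [hw4 _ (by omega), hidx]; exact hN
    · -- all steps are G-edges
      intro r hr
      rcases lt_trichotomy r r1 with hcase | hcase | hcase
      · rw [hw1 r (by omega), hw1 (r + 1) (by omega)]
        by_contra hc
        have hrB : r ∈ B := Finset.mem_filter.mpr ⟨Finset.mem_range.mpr (by omega), hc⟩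
        have := B.min'_le r hrB
        omega
      · rw [hcase, hw1 r1 le_rfl, hw2]
        exact ha1
      · rcases lt_trichotomy r (r1 + 2) with hcase2 | hcase2 | hcase2
        · have hr' : r = r1 + 1 := by omega
          subst hr'
          rw [hw2]
          have : r1 + 1 + 1 = r1 + 2 := by omega
          rw [this, hw3]
          exact G.mem_edgeSet.mp (show s(x1, y1) ∈ G.edgeSet by rwa [← hb1] at hee)
        · subst hcase2
          rw [hw3]
          have h5 : r1 + 2 + 1 = r1 + 3 := by omega
          rw [h5, hw4 _ (by omega)]
          have h6 : r1 + 3 + 2 * m - 2 = r2 + 1 := by omega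
          rw [h6]
          exact hc2
        · rw [hw4 r (by omega), hw4 (r + 1) (by omega)]
          have h5 : r + 1 + 2 * m - 2 = (r + 2 * m - 2) + 1 := by omega
          rw [h5]
          by_contra hc
          have hrB : (r + 2 * m - 2) ∈ B :=
            Finset.mem_filter.mpr ⟨Finset.mem_range.mpr (by omega), hc⟩
          have := B.le_max' _ hrB
          omega
    · -- matched edges are in E
      intro l hl
      rcases lt_trichotomy l l₁ with hcase | hcase | hcase
      · rw [hw1 _ (by omega), hw1 _ (by omega)]
        exact List.mem_of_mem_erase (hmem l (by omega))
      · have h5 : 2 * l + 1 = r1 + 1 := by omega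
        have h6 : 2 * l + 2 = r1 + 2 := by omega
        rw [h5, h6, hw2, hw3, hb1]
        exact he
      · rw [hw4 _ (by omega), hw4 _ (by omega)]
        have h5 : 2 * l + 1 + 2 * m - 2 = 2 * (l + m - 1) + 1 := by omega
        have h6 : 2 * l + 2 + 2 * m - 2 = 2 * (l + m - 1) + 2 := by omega
        rw [h5, h6]
        exact List.mem_of_mem_erase (hmem (l + m - 1) (by omega))
    · -- multiplicity bound
      intro e' he'
      set S := (Finset.range (k + 1 - m)).filter
        (fun l => s(w (2 * l + 1), w (2 * l + 2)) = e') with hSdef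
      have hmap : ∀ l ∈ S.erase l₁, (if l < l₁ then l else l + m - 1) ∈
          (Finset.range k).filter
            (fun l => s(q (2 * l + 1), q (2 * l + 2)) = e') := by
        intro l hl
        have hne := Finset.ne_of_mem_erase hl
        have hl' := Finset.mem_filter.mp (Finset.mem_of_mem_erase hl)
        obtain ⟨hl1, hl2⟩ := hl'
        have hl1' := Finset.mem_range.mp hl1
        simp only [Finset.mem_filter, Finset.mem_range]
        split_ifs with hcase
        · rw [hw1 _ (by omega), hw1 _ (by omega)] at hl2
          exact ⟨by omega, hl2⟩
        · have hlgt : l₁ < l := by omega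
          rw [hw4 _ (by omega), hw4 _ (by omega)] at hl2
          have h5 : 2 * l + 1 + 2 * m - 2 = 2 * (l + m - 1) + 1 := by omega
          have h6 : 2 * l + 2 + 2 * m - 2 = 2 * (l + m - 1) + 2 := by omega
          rw [h5, h6] at hl2
          exact ⟨by omega, hl2⟩
      have hinj : Set.InjOn (fun l => if l < l₁ then l else l + m - 1) ↑(S.erase l₁) := by
        intro a haa b hbb hab
        have hna := Finset.ne_of_mem_erase haa
        have hnb := Finset.ne_of_mem_erase hbb
        simp only at hab
        split_ifs at hab <;> omega
      have hcard1 : (S.erase l₁).card ≤ ((Finset.range k).filter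
          (fun l => s(q (2 * l + 1), q (2 * l + 2)) = e')).card :=
        Finset.card_le_card_of_injOn _ hmap hinj
      by_cases hcase : e' = e
      · have hScard : S.card ≤ (S.erase l₁).card + 1 := by
          by_cases hmem1 : l₁ ∈ S
          · rw [Finset.card_erase_of_mem hmem1]
            have : 1 ≤ S.card := Finset.card_pos.mpr ⟨l₁, hmem1⟩
            omega
          · rw [Finset.erase_eq_of_notMem hmem1]
            omega
        have hcnt : (E.erase e).count e' = E.count e' - 1 := by
          rw [hcase]; exact List.count_erase_self
        have hpos : 1 ≤ E.count e' := by
          rw [hcase]; exact List.count_pos_iff.mpr he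
        calc S.card ≤ (S.erase l₁).card + 1 := hScard
          _ ≤ ((Finset.range k).filter
              (fun l => s(q (2 * l + 1), q (2 * l + 2)) = e')).card + 1 := by omega
          _ ≤ (E.erase e).count e' + 1 := by have := hqb e'; omega
          _ ≤ E.count e' := by omega
      · have hnotmem : l₁ ∉ S := by
          intro hmem1
          have hl2 := (Finset.mem_filter.mp hmem1).2
          have h5 : 2 * l₁ + 1 = r1 + 1 := by omega
          have h6 : 2 * l₁ + 2 = r1 + 2 := by omega
          rw [h5, h6, hw2, hw3, hb1] at hl2
          exact hcase hl2.symm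
        rw [Finset.erase_eq_of_notMem hnotmem] at hcard1
        calc S.card ≤ _ := hcard1
          _ ≤ (E.erase e).count e' := hqb e'
          _ = E.count e' := List.count_erase_of_ne hcase


lemma ec_E_of_single [DecidableEq V] {G : SimpleGraph V} {e : Sym2 V}
    {E : List (Sym2 V)} (hee : e ∈ G.edgeSet) (heE : e ∈ E)
    {a b x y : V} (hax : G.Adj a x) (hxy : s(x, y) = e) (hyb : G.Adj y b) :
    EvenConnected G E a b := by
  refine ⟨1, fun m => if m = 0 then a else if m = 1 then x else if m = 2 then y else b,
    le_refl 1, rfl, rfl, ?_, ?_, ?_⟩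
  · intro r hr
    interval_cases r
    · simpa using hax
    · have : G.Adj x y := G.mem_edgeSet.mp (by rwa [← hxy] at hee)
      simpa using this
    · simpa using hyb
  · intro l hl
    interval_cases l
    simpa [hxy] using heE
  · intro e' he'
    by_cases hc : e' = e
    · subst hc
      calc _ ≤ (Finset.range 1).card := Finset.card_filter_le _ _
        _ ≤ _ := by simpa using List.count_pos_iff.mpr heE
    · have hempty : ((Finset.range 1).filter
          (fun l => s((if 2 * l + 1 = 0 then a else if 2 * l + 1 = 1 then x
              else if 2 * l + 1 = 2 then y else b),
            (if 2 * l + 2 = 0 then a else if 2 * l + 2 = 1 then x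
              else if 2 * l + 2 = 2 then y else b)) = e')) = ∅ := by
        rw [Finset.filter_eq_empty_iff]
        intro l hl
        have hl0 : l = 0 := by simpa using hl
        subst hl0
        simp only [show (2 * 0 + 1 : ℕ) = 1 from rfl, show (2 * 0 + 2 : ℕ) = 2 from rfl,
          show ((1:ℕ) = 0) = False by simp, show ((1:ℕ) = 1) = True by simp,
          show ((2:ℕ) = 0) = False by simp, show ((2:ℕ) = 1) = False by simp,
          show ((2:ℕ) = 2) = True by simp, if_false, if_true]
        intro hcc
        exact hc (hcc.symm.trans hxy)
      rw [hempty]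
      simp


/-- (graph-theoretic content of Lemma 3.7) for bipartite `G` and
an edge `e` of the list `E`, `u, v` are even-connected w.r.t. `E` (or adjacent
in `G`) iff they are even-connected in `Gᵢ = G + (even-connections w.r.t. e)`
with respect to `E.erase e` (or adjacent in `Gᵢ`). -/
theorem colon_ideal_iteration
    [Fintype V] [DecidableEq V] (G : SimpleGraph V) (X Y : Set V)
    (hbip : IsBipartition G X Y) (E : List (Sym2 V))
    (hE : ∀ e' ∈ E, e' ∈ G.edgeSet) (e : Sym2 V) (he : e ∈ E)
    (Gi : SimpleGraph V)
    (hGi : Gi = SimpleGraph.fromRel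
      (fun a b => G.Adj a b ∨ EvenConnected G [e] a b))
    (u v : V) (huv : u ≠ v) :
    (G.Adj u v ∨ EvenConnected G E u v) ↔
      (Gi.Adj u v ∨ EvenConnected Gi (E.erase e) u v) := by
  have hGi' : Gi = auxGi G e := hGi
  subst hGi'
  have hee : e ∈ G.edgeSet := hE e he
  constructor
  · rintro (h | h)
    · exact Or.inl ((auxGi_adj_iff hee).mpr ⟨huv, Or.inl h⟩)
    · obtain ⟨k, p, hk, h0, hN, hadj, hmem, hcount⟩ := h
      have hadj' : ∀ r, r ≤ 2 * k → (auxGi G e).Adj (p r) (p (r + 1)) :=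
        fun r hr => (auxGi_adj_iff hee).mpr ⟨(hadj r hr).ne, Or.inl (hadj r hr)⟩
      have hres := claimA hbip hE he k hk p hadj' hmem hcount
        (by rw [h0, hN]; exact huv)
      rw [h0, hN] at hres
      exact hres
  · rintro (h | h)
    · rcases (auxGi_adj_iff hee).mp h with ⟨_, hG | ⟨x, y, h1, h2, h3⟩⟩
      · exact Or.inl hG
      · exact Or.inr (ec_E_of_single hee he h1 h2 h3)
    · exact Or.inr (claimB hbip hE he h)
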